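/- Time-regularity of the scheme solution at the grid: Let Ê be a sublinear expectation, X, Y ∈ ℝ^d random vectors with Ê[⟨p,X⟩] = 0 for all p (no mean uncertainty), Ê[|X|²] = M_X² < ∞, Ê[|Y|²] = M_Y² < ∞, and φ lower bounded β-Hölder with constant C_φ, β ∈ (0,1]. Let u^Δ be the recursive scheme solution as above, Δ ∈ (0,1), T ≥ 1, and set N := 2M_X² + 3M_Y². Then for τ a multiple of Δ with τ < T, and k ∈ ℕ with τ + kΔ ≤ T, a,b chosen as a = C_φ(β/2)ε, b = C_φ((2−β)/2)ε^(−β/(2−β)) for any ε > 0, one has for all x, y ∈ ℝ^d: u^Δ(τ + kΔ, x) ≤ u^Δ(τ, y) + a(1+Δ)^k |x−y|² + a N e^T kΔ + b. -/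

import Mathlib

private lemma stmt15_young (Cφ β ε : ℝ) (hCφ : 0 < Cφ) (hβ0 : 0 < β) (hβ1 : β ≤ 1)
    (hε : 0 < ε) (r : ℝ) (hr : 0 ≤ r) :
    Cφ * r ^ β ≤ (Cφ * (β / 2) * ε) * r ^ 2 + Cφ * ((2 - β) / 2) * ε ^ (-(β / (2 - β))) := by
  have h2β : 0 < 2 - β := by linarith
  have hpq : Real.HolderConjugate (2 / β) (2 / (2 - β)) := by
    rw [Real.holderConjugate_iff]; constructor
    · rw [lt_div_iff₀ hβ0]; linarith
    · field_simp; ring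
  have key := Real.young_inequality_of_nonneg
      (mul_nonneg (Real.rpow_nonneg hε.le (β / 2)) (Real.rpow_nonneg hr β))
      (Real.rpow_nonneg hε.le (-(β / 2))) hpq
  have e1 : ε ^ (β / 2) * r ^ β * ε ^ (-(β / 2)) = r ^ β := by
    rw [mul_comm (ε ^ (β / 2)) (r ^ β), mul_assoc, ← Real.rpow_add hε]
    simp
  have e2 : (ε ^ (β / 2) * r ^ β) ^ (2 / β) = ε * r ^ 2 := by
    rw [Real.mul_rpow (Real.rpow_nonneg hε.le _) (Real.rpow_nonneg hr _),
      ← Real.rpow_mul hε.le, ← Real.rpow_mul hr]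
    have hb2 : β / 2 * (2 / β) = 1 := by field_simp
    rw [hb2, Real.rpow_one]
    have hb3 : β * (2 / β) = 2 := by field_simp
    rw [hb3]
    norm_num [Real.rpow_two]
  have e3 : (ε ^ (-(β / 2))) ^ (2 / (2 - β)) = ε ^ (-(β / (2 - β))) := by
    rw [← Real.rpow_mul hε.le]
    congr 1
    field_simp
  rw [e1, e2, e3] at key
  have key2 : r ^ β ≤ (β / 2) * ε * r ^ 2 + ((2 - β) / 2) * ε ^ (-(β / (2 - β))) := by
    calc r ^ β ≤ ε * r ^ 2 / (2 / β) + ε ^ (-(β / (2 - β))) / (2 / (2 - β)) := key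
      _ = (β / 2) * ε * r ^ 2 + ((2 - β) / 2) * ε ^ (-(β / (2 - β))) := by
          field_simp
  calc Cφ * r ^ β ≤ Cφ * ((β / 2) * ε * r ^ 2 + ((2 - β) / 2) * ε ^ (-(β / (2 - β)))) :=
        mul_le_mul_of_nonneg_left key2 hCφ.le
    _ = _ := by ring

private lemma stmt15_normb (d : ℕ) (Δ : ℝ) (hΔ0 : 0 < Δ) (hΔ1 : Δ < 1)
    (z u v : EuclideanSpace ℝ (Fin d)) :
    ‖z + Real.sqrt Δ • u + Δ • v‖ ^ 2
      ≤ (1 + Δ) * ‖z‖ ^ 2 + Δ * (2 * ‖u‖ ^ 2 + 3 * ‖v‖ ^ 2)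
        + 2 * Real.sqrt Δ * inner ℝ z u := by
  set r := Real.sqrt Δ with hr_def
  have hr2 : r ^ 2 = Δ := Real.sq_sqrt hΔ0.le
  have hr0 : 0 ≤ r := Real.sqrt_nonneg _
  have hr1 : r ≤ 1 := by
    rw [hr_def, show (1:ℝ) = Real.sqrt 1 by simp]
    exact Real.sqrt_le_sqrt hΔ1.le
  have h1 : ‖(z + r • u) + Δ • v‖ ^ 2
      = ‖z + r • u‖ ^ 2 + 2 * inner ℝ (z + r • u) (Δ • v) + ‖Δ • v‖ ^ 2 :=
    norm_add_sq_real _ _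
  have h2 : ‖z + r • u‖ ^ 2 = ‖z‖ ^ 2 + 2 * (r * inner ℝ z u) + r ^ 2 * ‖u‖ ^ 2 := by
    rw [norm_add_sq_real, real_inner_smul_right, norm_smul]
    rw [Real.norm_eq_abs, abs_of_nonneg hr0]
    ring
  have h3 : inner ℝ (z + r • u) (Δ • v) = Δ * ((inner ℝ z v : ℝ) + r * inner ℝ u v) := by
    rw [real_inner_smul_right, inner_add_left, real_inner_smul_left]
  have h4 : ‖Δ • v‖ ^ 2 = Δ ^ 2 * ‖v‖ ^ 2 := by
    rw [norm_smul, Real.norm_eq_abs, abs_of_nonneg hΔ0.le]; ring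
  have hzv : (inner ℝ z v : ℝ) ≤ ‖z‖ * ‖v‖ := real_inner_le_norm z v
  have huv : (inner ℝ u v : ℝ) ≤ ‖u‖ * ‖v‖ := real_inner_le_norm u v
  have hun : 0 ≤ ‖u‖ := norm_nonneg _
  have hvn : 0 ≤ ‖v‖ := norm_nonneg _
  have hzn : 0 ≤ ‖z‖ := norm_nonneg _
  rw [h1, h2, h3, h4, hr2]
  nlinarith [sq_nonneg (‖z‖ - ‖v‖), sq_nonneg (‖u‖ - ‖v‖),
    mul_le_mul_of_nonneg_left hzv hΔ0.le, mul_le_mul_of_nonneg_left huv hΔ0.le,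
    mul_nonneg (mul_nonneg hΔ0.le hun) hvn,
    mul_le_mul_of_nonneg_right (mul_le_mul_of_nonneg_left huv hΔ0.le) hr0,
    mul_le_mul_of_nonneg_left huv (mul_nonneg hΔ0.le hr0),
    mul_le_mul_of_nonneg_right (mul_le_mul_of_nonneg_left hr1 hΔ0.le) (mul_nonneg hun hvn),
    sq_nonneg Δ, mul_pos hΔ0 hΔ0,
    mul_le_mul_of_nonneg_left (sq_nonneg ‖v‖)
      (mul_pos hΔ0 (by linarith : (0:ℝ) < 1 - Δ)).le]

set_option maxHeartbeats 1000000 in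
theorem stmt_15 {Ω : Type*} (d : ℕ) (E : (Ω → ℝ) → ℝ)
    (hmono : ∀ X Y : Ω → ℝ, (∀ ω, X ω ≤ Y ω) → E X ≤ E Y)
    (hconst : ∀ c : ℝ, E (fun _ => c) = c)
    (hsub : ∀ X Y : Ω → ℝ, E (fun ω => X ω + Y ω) ≤ E X + E Y)
    (hpos : ∀ lam : ℝ, 0 ≤ lam → ∀ X : Ω → ℝ, E (fun ω => lam * X ω) = lam * E X)
    (X Y : Ω → EuclideanSpace ℝ (Fin d))
    (hX0 : ∀ p : EuclideanSpace ℝ (Fin d), E (fun ω => inner ℝ p (X ω)) = (0 : ℝ))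
    (MX2 MY2 : ℝ)
    (hMX2 : E (fun ω => ‖X ω‖ ^ 2) = MX2)
    (hMY2 : E (fun ω => ‖Y ω‖ ^ 2) = MY2)
    (φ : EuclideanSpace ℝ (Fin d) → ℝ) (Cφ β : ℝ) (hCφ : 0 < Cφ)
    (hβ0 : 0 < β) (hβ1 : β ≤ 1)
    (hφlb : ∃ m : ℝ, ∀ z, m ≤ φ z)
    (hφ : ∀ x y, |φ x - φ y| ≤ Cφ * ‖x - y‖ ^ β)
    (T Δ : ℝ) (hT : 1 ≤ T) (hΔ0 : 0 < Δ) (hΔ1 : Δ < 1)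
    (uΔ : ℝ → EuclideanSpace ℝ (Fin d) → ℝ)
    (h0 : ∀ t x, 0 ≤ t → t < Δ → uΔ t x = φ x)
    (hrec : ∀ t x, Δ ≤ t →
      uΔ t x = E (fun ω => uΔ (t - Δ) (x + Real.sqrt Δ • X ω + Δ • Y ω)))
    (N : ℝ) (hN : N = 2 * MX2 + 3 * MY2) :
    ∀ (j k : ℕ), (j : ℝ) * Δ < T → (j : ℝ) * Δ + (k : ℝ) * Δ ≤ T →
      ∀ ε : ℝ, 0 < ε →
        ∀ x y, uΔ ((j : ℝ) * Δ + (k : ℝ) * Δ) x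
          ≤ uΔ ((j : ℝ) * Δ) y
            + (Cφ * (β / 2) * ε) * (1 + Δ) ^ k * ‖x - y‖ ^ 2
            + (Cφ * (β / 2) * ε) * N * Real.exp T * (k : ℝ) * Δ
            + Cφ * ((2 - β) / 2) * ε ^ (-(β / (2 - β))) := by
  intro j k hjT hjkT ε hε x y
  set a : ℝ := Cφ * (β / 2) * ε with ha_def
  set b : ℝ := Cφ * ((2 - β) / 2) * ε ^ (-(β / (2 - β))) with hb_def
  have h2β : 0 < 2 - β := by linarith
  have ha0 : 0 < a := by
    apply mul_pos (mul_pos hCφ (by linarith)) hε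
  have young : ∀ r : ℝ, 0 ≤ r → Cφ * r ^ β ≤ a * r ^ 2 + b := fun r hr =>
    stmt15_young Cφ β ε hCφ hβ0 hβ1 hε r hr
  -- E of (f + const)
  have Econst_add : ∀ (f : Ω → ℝ) (c : ℝ), E (fun ω => f ω + c) ≤ E f + c := by
    intro f c
    calc E (fun ω => f ω + c) ≤ E f + E (fun _ => c) := hsub f _
      _ = E f + c := by rw [hconst]
  -- Spatial regularity at each grid time
  have spatial : ∀ (m : ℕ) (x y : EuclideanSpace ℝ (Fin d)),
      uΔ ((m : ℝ) * Δ) x ≤ uΔ ((m : ℝ) * Δ) y + (a * ‖x - y‖ ^ 2 + b) := by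
    intro m
    induction m with
    | zero =>
      intro x y
      simp only [Nat.cast_zero, zero_mul]
      rw [h0 0 x le_rfl hΔ0, h0 0 y le_rfl hΔ0]
      have h1 := hφ x y
      have h2 := young ‖x - y‖ (norm_nonneg _)
      have h3 := le_abs_self (φ x - φ y)
      linarith
    | succ n ih =>
      intro x y
      have ht : Δ ≤ ((n + 1 : ℕ) : ℝ) * Δ := by
        push_cast
        nlinarith [Nat.cast_nonneg (α := ℝ) n]
      rw [hrec _ x ht, hrec _ y ht]
      have harg : ((n + 1 : ℕ) : ℝ) * Δ - Δ = (n : ℝ) * Δ := by push_cast; ring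
      rw [harg]
      calc E (fun ω => uΔ ((n : ℝ) * Δ) (x + Real.sqrt Δ • X ω + Δ • Y ω))
          ≤ E (fun ω => uΔ ((n : ℝ) * Δ) (y + Real.sqrt Δ • X ω + Δ • Y ω)
                + (a * ‖x - y‖ ^ 2 + b)) := by
            apply hmono
            intro ω
            have h1 := ih (x + Real.sqrt Δ • X ω + Δ • Y ω)
              (y + Real.sqrt Δ • X ω + Δ • Y ω)
            have heq : (x + Real.sqrt Δ • X ω + Δ • Y ω)
                - (y + Real.sqrt Δ • X ω + Δ • Y ω) = x - y := by abel
            rwa [heq] at h1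
        _ ≤ _ := Econst_add _ _
  have normb : ∀ (z : EuclideanSpace ℝ (Fin d)) (ω : Ω),
      ‖z + Real.sqrt Δ • X ω + Δ • Y ω‖ ^ 2
        ≤ (1 + Δ) * ‖z‖ ^ 2 + Δ * (2 * ‖X ω‖ ^ 2 + 3 * ‖Y ω‖ ^ 2)
          + 2 * Real.sqrt Δ * inner ℝ z (X ω) := fun z ω =>
    stmt15_normb d Δ hΔ0 hΔ1 z (X ω) (Y ω)
  -- Nonnegativity of second moments
  have hMX0 : 0 ≤ MX2 := by
    rw [← hMX2, ← hconst 0]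
    exact hmono _ _ (fun ω => by positivity)
  have hMY0 : 0 ≤ MY2 := by
    rw [← hMY2, ← hconst 0]
    exact hmono _ _ (fun ω => by positivity)
  have hN0 : 0 ≤ N := by rw [hN]; linarith
  -- Key expectation bound
  have Ebound : ∀ (c A B : ℝ) (z : EuclideanSpace ℝ (Fin d)), 0 ≤ A →
      E (fun ω => (c + A * (2 * ‖X ω‖ ^ 2 + 3 * ‖Y ω‖ ^ 2)) + B * inner ℝ z (X ω))
        ≤ c + A * N := by
    intro c A B z hA
    have h1 : E (fun ω => B * inner ℝ z (X ω)) = 0 := by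
      have hrw : (fun ω => B * (inner ℝ z (X ω) : ℝ))
          = fun ω => (inner ℝ (B • z) (X ω) : ℝ) := by
        funext ω
        rw [real_inner_smul_left]
      rw [hrw, hX0]
    have h2 : E (fun ω => 2 * ‖X ω‖ ^ 2 + 3 * ‖Y ω‖ ^ 2) ≤ N := by
      calc E (fun ω => 2 * ‖X ω‖ ^ 2 + 3 * ‖Y ω‖ ^ 2)
          ≤ E (fun ω => 2 * ‖X ω‖ ^ 2) + E (fun ω => 3 * ‖Y ω‖ ^ 2) := hsub _ _
        _ = 2 * MX2 + 3 * MY2 := by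
            rw [hpos 2 (by norm_num), hpos 3 (by norm_num), hMX2, hMY2]
        _ = N := hN.symm
    have h3 : E (fun ω => c + A * (2 * ‖X ω‖ ^ 2 + 3 * ‖Y ω‖ ^ 2)) ≤ c + A * N := by
      calc E (fun ω => c + A * (2 * ‖X ω‖ ^ 2 + 3 * ‖Y ω‖ ^ 2))
          ≤ E (fun _ => c) + E (fun ω => A * (2 * ‖X ω‖ ^ 2 + 3 * ‖Y ω‖ ^ 2)) := hsub _ _
        _ = c + A * E (fun ω => 2 * ‖X ω‖ ^ 2 + 3 * ‖Y ω‖ ^ 2) := by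
            rw [hconst, hpos A hA]
        _ ≤ c + A * N := by nlinarith [mul_le_mul_of_nonneg_left h2 hA]
    calc E (fun ω => (c + A * (2 * ‖X ω‖ ^ 2 + 3 * ‖Y ω‖ ^ 2)) + B * inner ℝ z (X ω))
        ≤ E (fun ω => c + A * (2 * ‖X ω‖ ^ 2 + 3 * ‖Y ω‖ ^ 2))
          + E (fun ω => B * inner ℝ z (X ω)) := hsub _ _
      _ ≤ c + A * N := by rw [h1]; linarith
  -- main induction on k
  have main : ∀ (k : ℕ), (j : ℝ) * Δ + (k : ℝ) * Δ ≤ T → ∀ x,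
      uΔ ((j : ℝ) * Δ + (k : ℝ) * Δ) x
        ≤ uΔ ((j : ℝ) * Δ) y + a * (1 + Δ) ^ k * ‖x - y‖ ^ 2
          + a * N * Real.exp T * (k : ℝ) * Δ + b := by
    intro k
    induction k with
    | zero =>
      intro _ x
      have := spatial j x y
      simp only [Nat.cast_zero, zero_mul, add_zero, pow_zero, mul_zero, zero_mul]
      linarith
    | succ n ih =>
      intro hle x
      have hjΔ0 : (0:ℝ) ≤ (j : ℝ) * Δ := by positivity
      have hle' : (j : ℝ) * Δ + (n : ℝ) * Δ ≤ T := by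
        push_cast at hle ⊢
        nlinarith
      have ht : Δ ≤ (j : ℝ) * Δ + ((n + 1 : ℕ) : ℝ) * Δ := by
        push_cast
        nlinarith [Nat.cast_nonneg (α := ℝ) n]
      rw [hrec _ x ht]
      have harg : (j : ℝ) * Δ + ((n + 1 : ℕ) : ℝ) * Δ - Δ = (j : ℝ) * Δ + (n : ℝ) * Δ := by
        push_cast; ring
      rw [harg]
      have han : (0:ℝ) ≤ a * (1 + Δ) ^ n := by positivity
      set c : ℝ := uΔ ((j : ℝ) * Δ) y + a * (1 + Δ) ^ (n + 1) * ‖x - y‖ ^ 2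
        + a * N * Real.exp T * (n : ℝ) * Δ + b with hc_def
      set A : ℝ := a * (1 + Δ) ^ n * Δ with hA_def
      set B : ℝ := 2 * Real.sqrt Δ * (a * (1 + Δ) ^ n) with hB_def
      have hA : 0 ≤ A := by positivity
      have step1 : E (fun ω => uΔ ((j : ℝ) * Δ + (n : ℝ) * Δ) (x + Real.sqrt Δ • X ω + Δ • Y ω))
          ≤ E (fun ω => (c + A * (2 * ‖X ω‖ ^ 2 + 3 * ‖Y ω‖ ^ 2))
              + B * inner ℝ (x - y) (X ω)) := by
        apply hmono
        intro ω
        have hIH := ih hle' (x + Real.sqrt Δ • X ω + Δ • Y ω)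
        have hz : (x + Real.sqrt Δ • X ω + Δ • Y ω) - y
            = (x - y) + Real.sqrt Δ • X ω + Δ • Y ω := by abel
        rw [hz] at hIH
        have hnb := normb (x - y) ω
        have hmul := mul_le_mul_of_nonneg_left hnb han
        rw [hc_def, hA_def, hB_def, pow_succ]
        nlinarith [hmul]
      have step2 := Ebound c A B (x - y) hA
      have hexp : (1 + Δ) ^ n ≤ Real.exp T := by
        have e1 : (1:ℝ) + Δ ≤ Real.exp Δ := by
          have := Real.add_one_le_exp Δ
          linarith
        have e2 : (1 + Δ) ^ n ≤ Real.exp Δ ^ n :=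
          pow_le_pow_left₀ (by linarith) e1 n
        have e3 : Real.exp Δ ^ n = Real.exp ((n : ℝ) * Δ) := by
          rw [← Real.exp_nat_mul]
        have e4 : (n : ℝ) * Δ ≤ T := by nlinarith
        calc (1 + Δ) ^ n ≤ Real.exp ((n : ℝ) * Δ) := by rw [← e3]; exact e2
          _ ≤ Real.exp T := Real.exp_le_exp.mpr e4
      have hfin : c + A * N ≤ uΔ ((j : ℝ) * Δ) y
          + a * (1 + Δ) ^ (n + 1) * ‖x - y‖ ^ 2
          + a * N * Real.exp T * ((n + 1 : ℕ) : ℝ) * Δ + b := by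
        rw [hc_def, hA_def]
        push_cast
        have : a * (1 + Δ) ^ n * Δ * N ≤ a * N * Real.exp T * Δ := by
          have := mul_le_mul_of_nonneg_left hexp
            (mul_nonneg (mul_nonneg ha0.le hN0) hΔ0.le)
          nlinarith
        nlinarith
      push_cast
      push_cast at step1 step2 hfin ⊢
      linarith
  have := main k hjkT x
  linarith
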